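/- For any two strings x and y, there exists an optimal correspondence between x and y such that either the final run of x is not extended or the final run of y is not extended. -/

import Mathlib

open scoped BigOperators

variable {α : Type*}

/-- `xb` is the expansion of `x` obtained by replacing the `i`-th letter of `x`
with `ks[i] ≥ 1` consecutive copies of itself (equivalently, by extending runs). -/
def IsExpansionWith (x : List α) (ks : List ℕ) (xb : List α) : Prop :=
  ks.length = x.length ∧ (∀ k ∈ ks, 1 ≤ k) ∧
    xb = (x.zip ks).flatMap fun p => List.replicate p.2 p.1

/-- `xb` is an expansion of `x` (obtained by extending runs). -/
def IsExpansion (x xb : List α) : Prop := ∃ ks, IsExpansionWith x ks xb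

/-- The cost of a correspondence: sum of pointwise distances. -/
def corrCost (d : α → α → ℝ) (xb yb : List α) : ℝ :=
  ((xb.zip yb).map fun p => d p.1 p.2).sum

/-- A correspondence between `x` and `y`: a pair of equal-length expansions. -/
def IsCorrespondence (x y xb yb : List α) : Prop :=
  IsExpansion x xb ∧ IsExpansion y yb ∧ xb.length = yb.length

/-- Dynamic time warping distance: minimum cost of a correspondence. -/
noncomputable def dtw (d : α → α → ℝ) (x y : List α) : ℝ :=
  sInf {c | ∃ xb yb, IsCorrespondence x y xb yb ∧ c = corrCost d xb yb}

/-- The maximal runs of equal letters of a list. -/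
def runsOf [DecidableEq α] (x : List α) : List (List α) := x.splitBy (· == ·)

/-- Number of runs. -/
def numRuns [DecidableEq α] (x : List α) : ℕ := (runsOf x).length

/-- Length of the final run. -/
def lastRunLen [DecidableEq α] (x : List α) : ℕ := ((runsOf x).getLastD []).length

/-- Length of the `i`-th run (0-indexed). -/
def runLen [DecidableEq α] (x : List α) (i : ℕ) : ℕ := ((runsOf x).getD i []).length

/-- The letter populating the `i`-th run (0-indexed). -/
def runLetter [DecidableEq α] [Inhabited α] (x : List α) (i : ℕ) : α :=
  ((runsOf x).getD i []).headI

/-- The concatenation of the first `k` runs of `x`. -/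
def firstRuns [DecidableEq α] (k : ℕ) (x : List α) : List α := ((runsOf x).take k).flatten

/-- The prefix of `y` consisting of its first `ry` runs, up through the `oy`-th
letter of the `ry`-th run (runs are 1-indexed here). -/
def runPrefix [DecidableEq α] (ry oy : ℕ) (y : List α) : List α :=
  firstRuns (ry - 1) y ++ ((runsOf y).getD (ry - 1) []).take oy

/-- The subproblem `SP(x, y, rx, ry, oy)`: the minimum cost of a correspondence
between the first `rx` runs of `x` and the prefix of `y` ending at the `oy`-th
letter of its `ry`-th run, under the constraint that the final (`ry`-th) run of
the `y`-prefix is not extended; `⊤` if no such correspondence exists. -/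
noncomputable def SP [DecidableEq α] (d : α → α → ℝ) (x y : List α) (rx ry oy : ℕ) : EReal :=
  sInf ((fun p : List α × List α => ((corrCost d p.1 p.2 : ℝ) : EReal)) ''
    {p | IsCorrespondence (firstRuns rx x) (runPrefix ry oy y) p.1 p.2 ∧
         (0 < oy → lastRunLen p.2 = oy)})

/-- Generalized edit distance over a metric with null character `nul`:
insertion/deletion of `l` costs `d nul l`, substitution of `l` by `l'` costs `d l l'`. -/
noncomputable def ged (d : α → α → ℝ) (nul : α) : List α → List α → ℝ
  | [], [] => 0
  | [], b :: ys => d nul b + ged d nul [] ys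
  | a :: xs, [] => d nul a + ged d nul xs []
  | a :: xs, b :: ys =>
      min (d a b + ged d nul xs ys)
        (min (d nul a + ged d nul xs (b :: ys)) (d nul b + ged d nul (a :: xs) ys))
  termination_by x y => x.length + y.length

/-- Simple (Hamming/Levenshtein) edit distance: unit-cost insertions, deletions
and substitutions. -/
def edH [DecidableEq α] : List α → List α → ℕ
  | [], ys => ys.length
  | xs, [] => xs.length
  | a :: xs, b :: ys =>
      min ((if a = b then 0 else 1) + edH xs ys)
        (min (1 + edH xs (b :: ys)) (1 + edH (a :: xs) ys))
  termination_by x y => x.length + y.length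

/-- Simple edit distance with only unit-cost insertions and deletions. -/
def edS [DecidableEq α] : List α → List α → ℕ
  | [], ys => ys.length
  | xs, [] => xs.length
  | a :: xs, b :: ys =>
      if a = b then
        min (edS xs ys) (min (1 + edS xs (b :: ys)) (1 + edS (a :: xs) ys))
      else
        min (1 + edS xs (b :: ys)) (1 + edS (a :: xs) ys)
  termination_by x y => x.length + y.length

/-- The padded string `p(x) = ∅ x₁ ∅ x₂ ∅ ⋯ xₙ ∅`. -/
def pad (nul : α) (x : List α) : List α := nul :: x.flatMap fun a => [a, nul]

/-- The `r`-simplification for edit distance: remove all letters of magnitude at most `r`. -/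
noncomputable def sEd [MetricSpace α] (nul : α) (r : ℝ) (x : List α) : List α :=
  x.filter fun l => decide (r < dist nul l)


namespace DTWAux

variable {α : Type*}

theorem loop_gs (R : α → α → Bool) : ∀ (l : List α) (ag : α) (g : List α) (gs : List (List α)),
    List.splitBy.loop R l ag g gs = gs.reverse ++ List.splitBy.loop R l ag g [] := by
  intro l
  induction l with
  | nil => intro ag g gs; simp [List.splitBy.loop]
  | cons a as ih =>
    intro ag g gs
    simp only [List.splitBy.loop]
    cases hR : R ag a
    · rw [ih a [] ((ag::g).reverse::gs), ih a [] [(ag::g).reverse]]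
      simp
    · rw [ih a (ag::g) gs]

theorem loop_g (R : α → α → Bool) : ∀ (l : List α) (ag : α) (g : List α),
    List.splitBy.loop R l ag g [] =
      (g.reverse ++ (List.splitBy.loop R l ag [] []).headD []) ::
        (List.splitBy.loop R l ag [] []).tail := by
  intro l
  induction l with
  | nil => intro ag g; simp [List.splitBy.loop]
  | cons a as ih =>
    intro ag g
    simp only [List.splitBy.loop]
    cases hR : R ag a
    · rw [loop_gs R as a [] [(ag::g).reverse], loop_gs R as a [] [[ag].reverse]]
      simp
    · rw [ih a (ag::g), ih a [ag]]
      simp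

theorem splitBy_cons_cons (R : α → α → Bool) (a b : α) (l : List α) :
    List.splitBy R (a :: b :: l) =
      if R a b then (a :: (List.splitBy R (b::l)).headD []) :: (List.splitBy R (b::l)).tail
      else [a] :: List.splitBy R (b :: l) := by
  show List.splitBy.loop R (b :: l) a [] [] = _
  simp only [List.splitBy.loop, List.splitBy]
  cases hR : R a b
  · rw [loop_gs R l b [] [[a].reverse]]
    simp
  · rw [loop_g R l b [a]]
    simp

theorem splitBy_singleton (R : α → α → Bool) (a : α) : List.splitBy R [a] = [[a]] := by
  simp [List.splitBy, List.splitBy.loop]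

theorem splitBy_ne_nil (R : α → α → Bool) (a : α) (l : List α) :
    List.splitBy R (a :: l) ≠ [] := by
  show List.splitBy.loop R l a [] [] ≠ []
  rw [loop_g]
  simp

theorem splitBy_replicate (R : α → α → Bool) (a : α) (hR : R a a = true) :
    ∀ k, 1 ≤ k → List.splitBy R (List.replicate k a) = [List.replicate k a] := by
  intro k
  induction k with
  | zero => omega
  | succ k ih =>
    intro _
    rcases Nat.eq_or_lt_of_le (Nat.one_le_iff_ne_zero.mpr (by omega) : 1 ≤ k+1) with h | h
    · rw [← h]; exact splitBy_singleton R a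
    · have hk : 1 ≤ k := by omega
      have hk' : List.replicate k a = a :: List.replicate (k-1) a := by
        cases k with
        | zero => omega
        | succ k => rfl
      rw [List.replicate_succ, hk', splitBy_cons_cons R a a _, hR, ← hk', ih hk]
      simp [hk', List.replicate_succ]

theorem splitBy_append_replicate [DecidableEq α] (a : α) : ∀ (m : List α) (k : ℕ), 1 ≤ k →
    (∀ h : m ≠ [], m.getLast h ≠ a) →
    List.splitBy (· == ·) (m ++ List.replicate k a) =
      List.splitBy (· == ·) m ++ [List.replicate k a] := by
  intro m
  induction m with
  | nil =>
    intro k hk _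
    rw [List.nil_append, splitBy_replicate (· == ·) a (by simp) k hk]
    rfl
  | cons b m' ih =>
    intro k hk hlast
    cases m' with
    | nil =>
      have hba : b ≠ a := hlast (by simp)
      have hrep : List.replicate k a = a :: List.replicate (k-1) a := by
        cases k with
        | zero => omega
        | succ k => rfl
      rw [List.singleton_append, hrep, splitBy_cons_cons, ← hrep,
        splitBy_replicate _ a (by simp) k hk, splitBy_singleton]
      simp [hba]
    | cons c m'' =>
      have hm' : (c :: m'') ≠ [] := by simp
      have hlast' : ∀ h : (c :: m'') ≠ [], (c :: m'').getLast h ≠ a := by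
        intro h
        rw [← List.getLast_cons (l := c :: m'') (a := b) (by simp)]
        exact hlast (by simp)
      have IH := ih k hk hlast'
      have hS : List.splitBy (· == ·) (c :: m'') ≠ [] := splitBy_ne_nil _ c m''
      have hlist : (b :: c :: m'') ++ List.replicate k a
          = b :: c :: (m'' ++ List.replicate k a) := by simp
      rw [hlist, splitBy_cons_cons]
      have hlist2 : c :: (m'' ++ List.replicate k a) = (c :: m'') ++ List.replicate k a := by simp
      rw [hlist2, IH, splitBy_cons_cons]
      obtain ⟨s, ss, hs⟩ : ∃ s ss, List.splitBy (· == ·) (c :: m'') = s :: ss := by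
        cases hE : List.splitBy (· == ·) (c :: m'') with
        | nil => exact absurd hE hS
        | cons s ss => exact ⟨s, ss, rfl⟩
      rw [hs]
      cases hR : (b == c) <;> simp


section Exp
variable {α : Type*}

theorem exp_nil {xb : List α} : IsExpansion [] xb ↔ xb = [] := by
  constructor
  · rintro ⟨ks, hlen, _, hxb⟩
    simp at hxb; exact hxb
  · rintro rfl
    exact ⟨[], by simp [IsExpansionWith]⟩

theorem exp_cons {a : α} {x xb : List α} :
    IsExpansion (a :: x) xb ↔
      ∃ k u, 1 ≤ k ∧ IsExpansion x u ∧ xb = List.replicate k a ++ u := by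
  constructor
  · rintro ⟨ks, hlen, hpos, hxb⟩
    cases ks with
    | nil => simp at hlen
    | cons k ks' =>
      refine ⟨k, (x.zip ks').flatMap fun p => List.replicate p.2 p.1, hpos k (by simp), ⟨ks', ?_, ?_, rfl⟩, ?_⟩
      · simpa using hlen
      · intro k' hk'; exact hpos k' (by simp [hk'])
      · simpa using hxb
  · rintro ⟨k, u, hk, ⟨ks, hlen, hpos, rfl⟩, rfl⟩
    refine ⟨k :: ks, by simpa using hlen, ?_, by simp⟩
    intro k' hk'
    rcases List.mem_cons.mp hk' with rfl | h
    · exact hk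
    · exact hpos k' h

theorem exp_refl (x : List α) : IsExpansion x x := by
  induction x with
  | nil => exact exp_nil.mpr rfl
  | cons a x ih => exact exp_cons.mpr ⟨1, x, le_refl 1, ih, by simp⟩

theorem exp_ne_nil {x xb : List α} (h : IsExpansion x xb) (hx : x ≠ []) : xb ≠ [] := by
  cases x with
  | nil => exact absurd rfl hx
  | cons a x =>
    obtain ⟨k, u, hk, _, rfl⟩ := exp_cons.mp h
    have : 0 < (List.replicate k a ++ u).length := by
      simp; omega
    exact List.ne_nil_of_length_pos this

theorem exp_length {x xb : List α} (h : IsExpansion x xb) : x.length ≤ xb.length := by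
  induction x generalizing xb with
  | nil => rw [exp_nil.mp h]
  | cons a x ih =>
    obtain ⟨k, u, hk, hu, rfl⟩ := exp_cons.mp h
    have := ih hu
    simp; omega

theorem exp_mem {x xb : List α} (h : IsExpansion x xb) : ∀ a ∈ xb, a ∈ x := by
  induction x generalizing xb with
  | nil => rw [exp_nil.mp h]; simp
  | cons a x ih =>
    obtain ⟨k, u, hk, hu, rfl⟩ := exp_cons.mp h
    intro b hb
    rcases List.mem_append.mp hb with hb | hb
    · simp [List.eq_of_mem_replicate hb]
    · exact List.mem_cons_of_mem a (ih hu b hb)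

theorem exp_getLast? {x xb : List α} (h : IsExpansion x xb) : xb.getLast? = x.getLast? := by
  induction x generalizing xb with
  | nil => rw [exp_nil.mp h]
  | cons a x ih =>
    obtain ⟨k, u, hk, hu, rfl⟩ := exp_cons.mp h
    cases x with
    | nil =>
      rw [exp_nil.mp hu]
      rw [List.append_nil]
      rw [List.getLast?_replicate]
      have : k ≠ 0 := by omega
      simp [this]
    | cons b y =>
      have hu' : u ≠ [] := exp_ne_nil hu (by simp)
      rw [List.getLast?_append_of_ne_nil _ hu', ih hu]
      exact (List.getLast?_cons_cons ..).symm

theorem exp_append_replicate {m m' : List α} {a : α} {k K : ℕ}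
    (h : IsExpansion m m') (hk : 1 ≤ k) (hK : k ≤ K) :
    IsExpansion (m ++ List.replicate k a) (m' ++ List.replicate K a) := by
  induction m generalizing m' with
  | nil =>
    rw [exp_nil.mp h, List.nil_append, List.nil_append]
    have hrep : List.replicate k a = a :: List.replicate (k-1) a := by
      cases k with
      | zero => omega
      | succ k => rfl
    rw [hrep]
    refine exp_cons.mpr ⟨K - (k-1), List.replicate (k-1) a, by omega, exp_refl _, ?_⟩
    rw [← List.replicate_add]
    congr 1
    omega
  | cons b mt ih =>
    obtain ⟨j, u, hj, hu, rfl⟩ := exp_cons.mp h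
    have := ih hu
    refine exp_cons.mpr ⟨j, u ++ List.replicate K a, hj, this, by simp⟩

theorem exp_split_replicate {m xb : List α} {a : α} {k : ℕ} (hk : 1 ≤ k)
    (h : IsExpansion (m ++ List.replicate k a) xb) :
    ∃ m' K, IsExpansion m m' ∧ k ≤ K ∧ xb = m' ++ List.replicate K a := by
  induction m generalizing xb with
  | nil =>
    rw [List.nil_append] at h
    suffices hs : ∀ k, 1 ≤ k → ∀ xb : List α, IsExpansion (List.replicate k a) xb →
        ∃ K, k ≤ K ∧ xb = List.replicate K a by
      obtain ⟨K, hK, rfl⟩ := hs k hk xb h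
      exact ⟨[], K, exp_nil.mpr rfl, hK, by simp⟩
    intro k
    induction k with
    | zero => omega
    | succ k ihk =>
      intro _ xb hxb
      rw [List.replicate_succ] at hxb
      obtain ⟨j, u, hj, hu, rfl⟩ := exp_cons.mp hxb
      cases Nat.eq_zero_or_pos k with
      | inl h0 =>
        subst h0
        rw [exp_nil.mp hu, List.append_nil]
        exact ⟨j, by omega, rfl⟩
      | inr hpos =>
        obtain ⟨K, hK, rfl⟩ := ihk hpos u hu
        exact ⟨j + K, by omega, by rw [← List.replicate_add]⟩
  | cons b mt ih =>
    rw [List.cons_append] at h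
    obtain ⟨j, u, hj, hu, rfl⟩ := exp_cons.mp h
    obtain ⟨m', K, hm', hK, rfl⟩ := ih hu
    exact ⟨List.replicate j b ++ m', K, exp_cons.mpr ⟨j, m', hj, hm', rfl⟩, hK, by simp⟩

end Exp
end DTWAux


namespace DTWAux
section Cost
variable {α : Type*}

theorem corrCost_nil_left (d : α → α → ℝ) (yb : List α) : corrCost d [] yb = 0 := by
  simp [corrCost]

theorem corrCost_cons (d : α → α → ℝ) (a b : α) (u v : List α) :
    corrCost d (a :: u) (b :: v) = d a b + corrCost d u v := by
  simp [corrCost]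

theorem corrCost_nonneg {d : α → α → ℝ} (hd : ∀ a b, 0 ≤ d a b) (xb yb : List α) :
    0 ≤ corrCost d xb yb := by
  induction xb generalizing yb with
  | nil => simp [corrCost]
  | cons a u ih =>
    cases yb with
    | nil => simp [corrCost]
    | cons b v =>
      rw [corrCost_cons]
      exact add_nonneg (hd a b) (ih v)

theorem corrCost_rep (d : α → α → ℝ) (a b : α) (u v : List α) :
    ∀ k l : ℕ, k ≤ l →
    corrCost d (List.replicate k a ++ u) (List.replicate l b ++ v) =
      k * d a b + corrCost d u (List.replicate (l - k) b ++ v) := by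
  intro k
  induction k with
  | zero => intro l _; simp
  | succ k ih =>
    intro l hl
    obtain ⟨l', rfl⟩ : ∃ l', l = l' + 1 := ⟨l - 1, by omega⟩
    rw [List.replicate_succ, List.replicate_succ, List.cons_append, List.cons_append,
      corrCost_cons, ih l' (by omega)]
    have : l' + 1 - (k + 1) = l' - k := by omega
    rw [this]
    push_cast
    ring

theorem corrCost_concat (d : α → α → ℝ) (c c' : α) :
    ∀ s t : List α, s.length = t.length →
    corrCost d (s ++ [c]) (t ++ [c']) = corrCost d s t + d c c' := by
  intro s
  induction s with
  | nil =>
    intro t ht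
    rw [List.length_nil] at ht
    rw [(List.length_eq_zero_iff.mp ht.symm : t = [])]
    simp [corrCost]
  | cons a s ih =>
    intro t ht
    cases t with
    | nil => simp at ht
    | cons b t =>
      simp only [List.cons_append, corrCost_cons]
      rw [ih t (by simpa using ht)]
      ring

theorem corrCost_flip (d : α → α → ℝ) :
    ∀ xb yb : List α, corrCost d xb yb = corrCost (fun p q => d q p) yb xb := by
  intro xb
  induction xb with
  | nil => intro yb; simp [corrCost]
  | cons a u ih =>
    intro yb
    cases yb with
    | nil => simp [corrCost]
    | cons b v => rw [corrCost_cons, corrCost_cons, ih v]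

theorem lastRunLen_append_replicate [DecidableEq α] {m : List α} {a : α} {k : ℕ}
    (hk : 1 ≤ k) (hlast : ∀ h : m ≠ [], m.getLast h ≠ a) :
    lastRunLen (m ++ List.replicate k a) = k := by
  unfold lastRunLen runsOf
  rw [splitBy_append_replicate a m k hk hlast, List.getLastD_concat]
  exact List.length_replicate

theorem exists_last_decomp {l : List α} (hl : l ≠ []) :
    ∃ m k a, 1 ≤ k ∧ (∀ h : m ≠ [], m.getLast h ≠ a) ∧ l = m ++ List.replicate k a := by
  induction l with
  | nil => exact absurd rfl hl
  | cons b l ih =>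
    cases l with
    | nil =>
      exact ⟨[], 1, b, le_refl 1, by simp, by simp⟩
    | cons c lt =>
      obtain ⟨m, k, a, hk, hlast, heq⟩ := ih (by simp)
      cases m with
      | nil =>
        simp only [List.nil_append] at heq
        by_cases hba : b = a
        · subst hba
          exact ⟨[], k+1, b, by omega, by simp, by rw [List.nil_append, List.replicate_succ, heq]⟩
        · exact ⟨[b], k, a, hk, by simpa using hba, by rw [heq]; rfl⟩
      | cons m0 mt =>
        refine ⟨b :: m0 :: mt, k, a, hk, ?_, by rw [heq]; rfl⟩
        intro h
        rw [List.getLast_cons (by simp)]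
        exact hlast (by simp)

end Cost
end DTWAux


namespace DTWAux
section Shrink
variable {α : Type*}

/-- The statement that any correspondence can be shrunk to one of bounded length
without increasing the cost. -/
def ShrinkStmt (α : Type*) (M : ℕ) : Prop :=
  ∀ (d : α → α → ℝ), (∀ a b, 0 ≤ d a b) →
  ∀ x y xb yb : List α, x ≠ [] → y ≠ [] → IsCorrespondence x y xb yb →
    x.length + y.length + xb.length ≤ M →
    ∃ xb' yb', IsCorrespondence x y xb' yb' ∧
      corrCost d xb' yb' ≤ corrCost d xb yb ∧ xb'.length + 1 ≤ x.length + y.length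

theorem exp_nil_of_exp_nil {y v : List α} (hv : IsExpansion y v) (h : v = []) : y = [] := by
  by_contra hy
  exact exp_ne_nil hv hy h

theorem shrink_step (M : ℕ) (IH : ShrinkStmt α M) (d : α → α → ℝ) (hd : ∀ a b, 0 ≤ d a b)
    (a b : α) (xt yt u v : List α) (k l : ℕ) (hk : 1 ≤ k) (hl : 1 ≤ l) (hkl : k ≤ l)
    (hu : IsExpansion xt u) (hv : IsExpansion yt v)
    (hlen : k + u.length = l + v.length)
    (hM : (1 + xt.length) + (1 + yt.length) + (k + u.length) ≤ M + 1) :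
    ∃ xb' yb', IsCorrespondence (a :: xt) (b :: yt) xb' yb' ∧
      corrCost d xb' yb' ≤ corrCost d (List.replicate k a ++ u) (List.replicate l b ++ v) ∧
      xb'.length + 1 ≤ (a :: xt).length + (b :: yt).length := by
  have hcost := corrCost_rep d a b u v k l hkl
  by_cases hxt : xt = []
  · -- u = [], hence v = [], k = l, yt = []
    subst hxt
    have hu0 : u = [] := exp_nil.mp hu
    subst hu0
    have hv0 : v = [] := by
      have : v.length = 0 := by simp at hlen; omega
      exact List.length_eq_zero_iff.mp this
    subst hv0
    have hyt : yt = [] := exp_nil_of_exp_nil hv rfl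
    subst hyt
    have hkl' : k = l := by simp at hlen; omega
    subst hkl'
    refine ⟨[a], [b], ⟨exp_refl [a], exp_refl [b], rfl⟩, ?_, by simp⟩
    rw [hcost]
    have h1 : corrCost d [a] [b] = d a b := by simp [corrCost]
    have h2 : corrCost d [] (List.replicate (k - k) b ++ []) = 0 := corrCost_nil_left _ _
    rw [h1, h2, add_zero]
    nlinarith [hd a b, (by exact_mod_cast hk : (1:ℝ) ≤ (k:ℝ))]
  · have hune : u ≠ [] := exp_ne_nil hu hxt
    rcases Nat.lt_or_ge k l with hlt | hge
    · -- k < l : recurse on (xt, b :: yt)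
      have hexp2 : IsExpansion (b :: yt) (List.replicate (l - k) b ++ v) :=
        exp_cons.mpr ⟨l - k, v, by omega, hv, rfl⟩
      have hcorr2 : IsCorrespondence xt (b :: yt) u (List.replicate (l - k) b ++ v) := by
        refine ⟨hu, hexp2, ?_⟩
        simp
        omega
      obtain ⟨u', w', hcorr', hcost', hlen'⟩ :=
        IH d hd xt (b :: yt) u (List.replicate (l - k) b ++ v) hxt (by simp) hcorr2
          (by simp; omega)
      obtain ⟨hu', hw', hlenuw⟩ := hcorr'
      obtain ⟨l', v', hl', hv', rfl⟩ := exp_cons.mp hw'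
      refine ⟨a :: u', b :: (List.replicate l' b ++ v'), ?_, ?_, ?_⟩
      · refine ⟨exp_cons.mpr ⟨1, u', le_refl 1, hu', by simp⟩, ?_, by simpa using hlenuw⟩
        exact exp_cons.mpr ⟨l' + 1, v', by omega, hv', by rw [List.replicate_succ]; simp⟩
      · rw [corrCost_cons d a b u' (List.replicate l' b ++ v'), hcost]
        have : d a b ≤ (k : ℝ) * d a b := by
          nlinarith [hd a b, (by exact_mod_cast hk : (1:ℝ) ≤ (k:ℝ))]
        linarith
      · simp only [List.length_cons] at hlen' ⊢
        omega
    · -- k = l : recurse on (xt, yt)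
      have hkeq : k = l := le_antisymm hkl hge
      subst hkeq
      have huv : u.length = v.length := by omega
      have hyt : yt ≠ [] := by
        intro h
        subst h
        have : v = [] := exp_nil.mp hv
        subst this
        exact hune (List.length_eq_zero_iff.mp (by simpa using huv))
      obtain ⟨u', v', hcorr', hcost', hlen'⟩ :=
        IH d hd xt yt u v hxt hyt ⟨hu, hv, huv⟩ (by omega)
      obtain ⟨hu', hv', hlenuv⟩ := hcorr'
      refine ⟨a :: u', b :: v', ?_, ?_, ?_⟩
      · exact ⟨exp_cons.mpr ⟨1, u', le_refl 1, hu', by simp⟩,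
          exp_cons.mpr ⟨1, v', le_refl 1, hv', by simp⟩, by simpa using hlenuv⟩
      · rw [corrCost_cons, hcost]
        have h0 : List.replicate (k - k) b ++ v = v := by simp
        rw [h0]
        have : d a b ≤ (k : ℝ) * d a b := by
          nlinarith [hd a b, (by exact_mod_cast hk : (1:ℝ) ≤ (k:ℝ))]
        linarith
      · simp only [List.length_cons] at hlen' ⊢
        omega

theorem shrink (M : ℕ) : ShrinkStmt α M := by
  induction M with
  | zero =>
    intro d hd x y xb yb hx hy hcorr hM
    exfalso
    have : 1 ≤ x.length := List.length_pos_iff.mpr hx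
    have : 1 ≤ y.length := List.length_pos_iff.mpr hy
    omega
  | succ M IH =>
    intro d hd x y xb yb hx hy hcorr hM
    obtain ⟨hxb, hyb, hlen⟩ := hcorr
    cases x with
    | nil => exact absurd rfl hx
    | cons a xt =>
    cases y with
    | nil => exact absurd rfl hy
    | cons b yt =>
    obtain ⟨k, u, hk, hu, rfl⟩ := exp_cons.mp hxb
    obtain ⟨l, v, hl, hv, rfl⟩ := exp_cons.mp hyb
    have hlen' : k + u.length = l + v.length := by simpa using hlen
    rcases Nat.lt_or_ge l k with hkl' | hkl
    case inr =>
      exact shrink_step M IH d hd a b xt yt u v k l hk hl hkl hu hv hlen'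
        (by simp at hM ⊢; omega)
    case inl =>
      have IH' : ShrinkStmt α M := IH
      obtain ⟨yb', xb', hcorr', hcost', hlen''⟩ :=
        shrink_step M IH (fun p q => d q p) (fun p q => hd q p) b a yt xt v u l k hl hk
          (le_of_lt hkl') hv hu (by omega) (by simp at hM ⊢; omega)
      obtain ⟨hyb', hxb', hlenxy⟩ := hcorr'
      refine ⟨xb', yb', ⟨hxb', hyb', hlenxy.symm⟩, ?_, ?_⟩
      · rw [corrCost_flip d xb' yb', corrCost_flip d (List.replicate k a ++ u) _]
        exact hcost'
      · have h1 : xb'.length = yb'.length := hlenxy.symm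
        omega

end Shrink
end DTWAux


namespace DTWAux
section Fin
variable {α : Type*}

theorem exp_const (x : List α) (c : ℕ) (hc : 1 ≤ c) :
    ∃ xb, IsExpansion x xb ∧ xb.length = c * x.length := by
  induction x with
  | nil => exact ⟨[], exp_nil.mpr rfl, by simp⟩
  | cons a xt ih =>
    obtain ⟨u, hu, hul⟩ := ih
    refine ⟨List.replicate c a ++ u, exp_cons.mpr ⟨c, u, hc, hu, rfl⟩, ?_⟩
    simp [hul]
    ring

theorem finite_bounded_lists (s : List α) (N : ℕ) :
    {l : List α | l.length ≤ N ∧ ∀ a ∈ l, a ∈ s}.Finite := by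
  have hfin : Finite {a // a ∈ s} := (s.finite_toSet).to_subtype
  refine ((List.finite_length_le {a // a ∈ s} N).image (List.map Subtype.val)).subset ?_
  rintro l ⟨hlen, hmem⟩
  refine ⟨l.attach.map (fun p => ⟨p.1, hmem p.1 p.2⟩), by simpa using hlen, ?_⟩
  simp [List.map_map]

theorem last_cond_of_exp {m m' : List α} {a : α} (h : IsExpansion m m')
    (hc : ∀ hh : m ≠ [], m.getLast hh ≠ a) : ∀ hh : m' ≠ [], m'.getLast hh ≠ a := by
  intro hh
  have hg : m'.getLast? = m.getLast? := exp_getLast? h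
  have hm : m ≠ [] := by
    intro he
    subst he
    simp at hg
    exact hh hg
  rw [List.getLast?_eq_getLast hh, List.getLast?_eq_getLast hm] at hg
  rw [Option.some_inj.mp hg]
  exact hc hm

end Fin
end DTWAux

/-- There is an optimal correspondence in which either the final run of `x` or
the final run of `y` is not extended. -/
theorem stmt2 [MetricSpace α] [DecidableEq α] (x y : List α)
    (hx : x ≠ []) (hy : y ≠ []) :
    ∃ xb yb : List α, IsCorrespondence x y xb yb ∧
      corrCost dist xb yb = dtw dist x y ∧
      (lastRunLen xb = lastRunLen x ∨ lastRunLen yb = lastRunLen y) := by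
  classical
  have hd : ∀ a b : α, 0 ≤ dist a b := fun a b => dist_nonneg
  set S : Set ℝ := {c | ∃ xb yb, IsCorrespondence x y xb yb ∧ c = corrCost dist xb yb} with hSdef
  have hdtwS : dtw dist x y = sInf S := rfl
  have hbdd : BddBelow S := by
    refine ⟨0, ?_⟩
    rintro c ⟨xb, yb, _, rfl⟩
    exact DTWAux.corrCost_nonneg hd xb yb
  have hn1 : 1 ≤ x.length := List.length_pos_iff.mpr hx
  have hm1 : 1 ≤ y.length := List.length_pos_iff.mpr hy
  obtain ⟨xb₀, hxb₀, hxl₀⟩ := DTWAux.exp_const x y.length hm1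
  obtain ⟨yb₀, hyb₀, hyl₀⟩ := DTWAux.exp_const y x.length hn1
  have hcorr₀ : IsCorrespondence x y xb₀ yb₀ := ⟨hxb₀, hyb₀, by rw [hxl₀, hyl₀]; ring⟩
  have hSne : S.Nonempty := ⟨_, xb₀, yb₀, hcorr₀, rfl⟩
  set P : Set (List α × List α) :=
    {p | IsCorrespondence x y p.1 p.2 ∧ p.1.length + 1 ≤ x.length + y.length} with hPdef
  have hPfin : P.Finite := by
    refine (Set.Finite.prod
      (DTWAux.finite_bounded_lists (x ++ y) (x.length + y.length))
      (DTWAux.finite_bounded_lists (x ++ y) (x.length + y.length))).subset ?_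
    rintro ⟨p1, p2⟩ ⟨⟨he1, he2, hl⟩, hb⟩
    simp only at he1 he2 hl hb
    refine Set.mem_prod.mpr ⟨⟨?_, ?_⟩, ⟨?_, ?_⟩⟩
    · show p1.length ≤ x.length + y.length
      omega
    · exact fun a ha => List.mem_append.mpr (Or.inl (DTWAux.exp_mem he1 a ha))
    · show p2.length ≤ x.length + y.length
      omega
    · exact fun a ha => List.mem_append.mpr (Or.inr (DTWAux.exp_mem he2 a ha))
  set Sb : Set ℝ := (fun p : List α × List α => corrCost dist p.1 p.2) '' P with hSbdef
  have hSbfin : Sb.Finite := hPfin.image _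
  have shrinkS : ∀ c ∈ S, ∃ c' ∈ Sb, c' ≤ c := by
    rintro c ⟨xb, yb, hcorr, rfl⟩
    obtain ⟨xb', yb', hcorr', hcost', hlen'⟩ :=
      DTWAux.shrink (x.length + y.length + xb.length) dist hd x y xb yb hx hy hcorr le_rfl
    exact ⟨_, ⟨(xb', yb'), ⟨hcorr', hlen'⟩, rfl⟩, hcost'⟩
  have hSbne : Sb.Nonempty := by
    obtain ⟨c0, hc0S⟩ := hSne
    obtain ⟨c', hc', _⟩ := shrinkS c0 hc0S
    exact ⟨c', hc'⟩
  have hc₀mem : sInf Sb ∈ Sb := hSbne.csInf_mem hSbfin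
  set c₀ := sInf Sb with hc₀def
  have hSbS : Sb ⊆ S := by
    rintro c ⟨⟨p1, p2⟩, ⟨hcorr, _⟩, rfl⟩
    exact ⟨p1, p2, hcorr, rfl⟩
  have hlow : ∀ c ∈ S, c₀ ≤ c := by
    intro c hc
    obtain ⟨c', hc', hle⟩ := shrinkS c hc
    exact le_trans (csInf_le hSbfin.bddBelow hc') hle
  have hdtw : dtw dist x y = c₀ := by
    rw [hdtwS]
    exact le_antisymm (csInf_le hbdd (hSbS hc₀mem)) (le_csInf hSne hlow)
  set T : Set ℕ :=
    {L | ∃ xb yb, IsCorrespondence x y xb yb ∧ corrCost dist xb yb = c₀ ∧ xb.length = L} with hTdef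
  have hTne : T.Nonempty := by
    obtain ⟨⟨p1, p2⟩, hp, hpc⟩ := hc₀mem
    exact ⟨p1.length, p1, p2, hp.1, hpc, rfl⟩
  obtain ⟨xb, yb, hcorr, hcost, hxbl⟩ := Nat.sInf_mem hTne
  refine ⟨xb, yb, hcorr, by rw [hcost, hdtw], ?_⟩
  by_contra hcon
  push_neg at hcon
  obtain ⟨hne_x, hne_y⟩ := hcon
  obtain ⟨mx, kx, ax, hkx, hlx, hxdec⟩ := DTWAux.exists_last_decomp hx
  obtain ⟨my, ky, ay, hky, hly, hydec⟩ := DTWAux.exists_last_decomp hy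
  have hlrx : lastRunLen x = kx := by
    rw [hxdec]; exact DTWAux.lastRunLen_append_replicate hkx hlx
  have hlry : lastRunLen y = ky := by
    rw [hydec]; exact DTWAux.lastRunLen_append_replicate hky hly
  obtain ⟨hxb, hyb, hlen⟩ := hcorr
  rw [hxdec] at hxb
  rw [hydec] at hyb
  obtain ⟨mx', Kx, hmx', hKx, hxbeq⟩ := DTWAux.exp_split_replicate hkx hxb
  obtain ⟨my', Ky, hmy', hKy, hybeq⟩ := DTWAux.exp_split_replicate hky hyb
  have hlrxb : lastRunLen xb = Kx := by
    rw [hxbeq]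
    exact DTWAux.lastRunLen_append_replicate (by omega) (DTWAux.last_cond_of_exp hmx' hlx)
  have hlryb : lastRunLen yb = Ky := by
    rw [hybeq]
    exact DTWAux.lastRunLen_append_replicate (by omega) (DTWAux.last_cond_of_exp hmy' hly)
  have hKx2 : kx + 1 ≤ Kx := by
    have : Kx ≠ kx := by rw [← hlrxb, ← hlrx]; exact hne_x
    omega
  have hKy2 : ky + 1 ≤ Ky := by
    have : Ky ≠ ky := by rw [← hlryb, ← hlry]; exact hne_y
    omega
  set xb1 : List α := mx' ++ List.replicate (Kx - 1) ax with hxb1def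
  set yb1 : List α := my' ++ List.replicate (Ky - 1) ay with hyb1def
  have hxb1exp : IsExpansion x xb1 := by
    rw [hxdec]; exact DTWAux.exp_append_replicate hmx' hkx (by omega)
  have hyb1exp : IsExpansion y yb1 := by
    rw [hydec]; exact DTWAux.exp_append_replicate hmy' hky (by omega)
  have hxbsplit : xb = xb1 ++ [ax] := by
    rw [hxbeq, hxb1def, List.append_assoc]
    congr 1
    rw [← List.replicate_succ' (n := Kx - 1) (a := ax)]
    congr 1
    omega
  have hybsplit : yb = yb1 ++ [ay] := by
    rw [hybeq, hyb1def, List.append_assoc]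
    congr 1
    rw [← List.replicate_succ' (n := Ky - 1) (a := ay)]
    congr 1
    omega
  have hlen1 : xb1.length = yb1.length := by
    rw [hxbsplit, hybsplit] at hlen
    simpa using hlen
  have hcorr1 : IsCorrespondence x y xb1 yb1 := ⟨hxb1exp, hyb1exp, hlen1⟩
  have hcost1 : corrCost dist xb yb = corrCost dist xb1 yb1 + dist ax ay := by
    rw [hxbsplit, hybsplit]
    exact DTWAux.corrCost_concat dist ax ay xb1 yb1 hlen1
  have h1S : corrCost dist xb1 yb1 ∈ S := ⟨xb1, yb1, hcorr1, rfl⟩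
  have h1eq : corrCost dist xb1 yb1 = c₀ := by
    have h1 := hlow _ h1S
    have h2 : corrCost dist xb1 yb1 ≤ c₀ := by
      have := hd ax ay
      rw [← hcost]
      linarith [hcost1]
    exact le_antisymm h2 h1
  have hT1 : xb1.length ∈ T := ⟨xb1, yb1, hcorr1, h1eq, rfl⟩
  have hlt : xb1.length < xb.length := by rw [hxbsplit]; simp
  have := Nat.sInf_le hT1
  omega
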